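/- arXiv:1012.5117 — 3 statements merged into one kernel-verified Lean document; each statement's English description precedes it below -/
import Mathlib

section
/- Let G be a finite connected graph in which the induced subgraph on a vertex set A is connected with girth greater than 2s for some s ≥ 4. Then the tree excess of A satisfies tx(A) ≤ |A|²/(s/2 - 1)². -/
open SimpleGraph Finset

namespace Stmt2Aux

open scoped Classical

variable {A : Type} [Fintype A]

/-- The (closed) ball of radius `r` about `v`, as a `Finset`. -/
noncomputable def ball (G : SimpleGraph A) (v : A) (r : ℕ) : Finset A :=
  univ.filter (fun u => G.dist v u ≤ r)

/-- The number of edges of `G` with both endpoints in `U`. -/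
noncomputable def eIn (G : SimpleGraph A) (U : Finset A) : ℕ :=
  (G.edgeFinset.filter (fun e => ∀ x ∈ e, x ∈ U)).card

variable {G : SimpleGraph A}

lemma mem_ball {v u : A} {r : ℕ} : u ∈ ball G v r ↔ G.dist v u ≤ r := by
  simp [ball]

lemma self_mem_ball {v : A} {r : ℕ} : v ∈ ball G v r := by
  simp [mem_ball, SimpleGraph.dist_self]

lemma ball_mono {v : A} {r r' : ℕ} (h : r ≤ r') : ball G v r ⊆ ball G v r' := by
  intro u hu
  rw [mem_ball] at hu ⊢
  omega

lemma adj_ball (hconn : G.Connected) {v u w : A} {r : ℕ}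
    (hu : u ∈ ball G v r) (hadj : G.Adj u w) : w ∈ ball G v (r + 1) := by
  rw [mem_ball] at hu ⊢
  have h1 : G.dist v w ≤ G.dist v u + G.dist u w := hconn.dist_triangle
  have h2 : G.dist u w ≤ 1 := by
    simpa using SimpleGraph.dist_le hadj.toWalk
  omega

/-- a path from `x` to `x` is trivial -/
lemma loop_path_nil {x : A} (p : G.Walk x x) (hp : p.IsPath) : p.length = 0 := by
  cases p with
  | nil => rfl
  | cons h q =>
    rw [Walk.cons_isPath_iff] at hp
    exact absurd q.end_mem_support hp.2

/-- a vertex farther from `v` than `y` cannot lie on a shortest walk from `v` to `y` -/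
lemma not_mem_shortest (hconn : G.Connected) {v x y : A} (hxy : x ≠ y)
    (hd : G.dist v y ≤ G.dist v x) {p : G.Walk v y} (hp : p.length = G.dist v y) :
    x ∉ p.support := by
  intro hx
  have h1 : G.dist v x ≤ (p.takeUntil x hx).length := SimpleGraph.dist_le _
  have h2 : (p.takeUntil x hx).length + (p.dropUntil x hx).length = p.length := by
    rw [← Walk.length_append, Walk.take_spec]
  have h3 : (p.dropUntil x hx).length = 0 := by omega
  exact hxy (Walk.Nil.eq (Walk.nil_iff_length_eq.mpr h3))

/-- Key geometric lemma: if all cycles of `G` are longer than `2r+2`, then no cycle of `G`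
lies entirely inside a ball of radius `r`. -/
lemma no_cycle_in_ball (hconn : G.Connected) {r : ℕ}
    (hlen : ∀ (x : A) (c : G.Walk x x), c.IsCycle → 2 * r + 2 < c.length)
    {w : A} (c0 : G.Walk w w) (hc0 : c0.IsCycle) (v : A)
    (hsup : ∀ x ∈ c0.support, G.dist v x ≤ r) : False := by
  -- pick a support vertex of maximal distance from v
  obtain ⟨x, hx, hxmax⟩ :=
    Finset.exists_max_image c0.support.toFinset (fun u => G.dist v u)
      ⟨w, by simp [c0.start_mem_support]⟩
  rw [List.mem_toFinset] at hx
  have hxmax' : ∀ y ∈ c0.support, G.dist v y ≤ G.dist v x := by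
    intro y hy; exact hxmax y (List.mem_toFinset.mpr hy)
  have hnn : ¬ (c0.rotate x hx).Nil := by
    have h3 := (hc0.rotate hx).three_le_length
    rw [Walk.nil_iff_length_eq]
    omega
  obtain ⟨y, hxy, q, hq⟩ := Walk.not_nil_iff.mp hnn
  have hc : (Walk.cons hxy q).IsCycle := hq ▸ hc0.rotate hx
  have hperm := Walk.support_rotate c0 x hx
  rw [hq] at hperm
  have hqsub : ∀ u ∈ q.support, u ∈ c0.support := by
    intro u hu
    have : u ∈ (Walk.cons hxy q).support.tail := by simpa using hu
    exact List.mem_of_mem_tail (hperm.mem_iff.mp this)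
  have h3len := hc.three_le_length
  rw [Walk.cons_isCycle_iff] at hc
  obtain ⟨hq', hexy⟩ := hc
  have hqrevnil : ¬ q.reverse.Nil := Walk.not_nil_of_ne hxy.ne
  obtain ⟨z, hxz, q2, hq2⟩ := Walk.not_nil_iff.mp hqrevnil
  -- y ≠ z
  have hyz : y ≠ z := by
    rintro rfl
    have hq2p : q2.IsPath := by
      have hrev : q.reverse.IsPath := hq'.reverse
      rw [hq2, Walk.cons_isPath_iff] at hrev
      exact hrev.1
    have hq20 : q2.length = 0 := loop_path_nil q2 hq2p
    have hql : q.length = 1 := by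
      have := congrArg Walk.length hq2
      simp [Walk.length_reverse] at this
      omega
    simp [Walk.length_cons, hql] at h3len
  -- membership facts
  have hysup : y ∈ c0.support := hqsub y q.start_mem_support
  have hzsupq : z ∈ q.support := by
    have : z ∈ q.reverse.support := by
      rw [hq2]
      simp [Walk.support_cons, q2.start_mem_support]
    simpa using this
  have hzsup : z ∈ c0.support := hqsub z hzsupq
  have hdx : G.dist v x ≤ r := hsup x hx
  have hdy : G.dist v y ≤ G.dist v x := hxmax' y hysup
  have hdz : G.dist v z ≤ G.dist v x := hxmax' z hzsup
  -- shortest walks from v to y and z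
  obtain ⟨py, hpy⟩ := hconn.exists_walk_length_eq_dist v y
  obtain ⟨pz, hpz⟩ := hconn.exists_walk_length_eq_dist v z
  have hxpy : x ∉ py.support := not_mem_shortest hconn hxy.ne hdy hpy
  have hxpz : x ∉ pz.support := not_mem_shortest hconn hxz.ne hdz hpz
  -- build a short cycle through x
  set W : G.Walk y z := py.reverse.append pz with hWdef
  have hxW : x ∉ W.support := by
    rw [hWdef]
    intro hmem
    rcases (Walk.mem_support_append_iff _ _).mp hmem with h | h
    · rw [Walk.support_reverse] at h
      exact hxpy (List.mem_reverse.mp h)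
    · exact hxpz h
  set R : G.Walk y z := W.bypass with hRdef
  have hRpath : R.IsPath := Walk.bypass_isPath W
  have hxR : x ∉ R.support := fun h => hxW (Walk.support_bypass_subset W h)
  have hRlen : R.length ≤ 2 * r := by
    have h1 : R.length ≤ W.length := Walk.length_bypass_le W
    have h2 : W.length = py.length + pz.length := by
      rw [hWdef, Walk.length_append, Walk.length_reverse]
    omega
  -- the path  y → ... → z → x
  have hP1path : (Walk.cons hxz R.reverse).IsPath := by
    apply Walk.IsPath.cons hRpath.reverse
    simpa using hxR
  set P : G.Walk y x := (Walk.cons hxz R.reverse).reverse with hPdef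
  have hPpath : P.IsPath := hP1path.reverse
  have hePxy : s(x, y) ∉ P.edges := by
    intro hmem
    rw [hPdef, Walk.edges_reverse, List.mem_reverse] at hmem
    rw [Walk.edges_cons] at hmem
    rcases List.mem_cons.mp hmem with h | h
    · rw [Sym2.eq_iff] at h
      rcases h with ⟨-, h2⟩ | ⟨-, h2⟩
      · exact hyz h2
      · exact hxy.ne' h2
    · rw [Walk.edges_reverse, List.mem_reverse] at h
      exact hxR (Walk.fst_mem_support_of_mem_edges R h)
  have hcyc : (Walk.cons hxy P).IsCycle :=
    SimpleGraph.Path.cons_isCycle ⟨P, hPpath⟩ hxy hePxy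
  have hlen' := hlen x (Walk.cons hxy P) hcyc
  have hplen : (Walk.cons hxy P).length = R.length + 2 := by
    simp [hPdef, Walk.length_reverse]
  omega


section Induce

/-- walks staying in `S` give reachability in the induced graph -/
lemma induce_reachable {S : Set A} {a b : A} (p : G.Walk a b)
    (hs : ∀ x ∈ p.support, x ∈ S) (ha : a ∈ S) (hb : b ∈ S) :
    (G.induce S).Reachable ⟨a, ha⟩ ⟨b, hb⟩ := by
  induction p with
  | nil => rfl
  | @cons u v w h p ih =>
    have hv : v ∈ S := hs v (by simp [Walk.support_cons])
    have hadj : (G.induce S).Adj ⟨u, ha⟩ ⟨v, hv⟩ := by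
      simpa using h
    exact (hadj.reachable).trans
      (ih (fun x hx => hs x (by simp [Walk.support_cons]; right; exact hx)) hv hb)

lemma card_edge_induce (U : Finset A) :
    (G.induce (↑U : Set A)).edgeFinset.card = eIn G U := by
  rw [eIn]
  apply Finset.card_bij (fun e _ => Sym2.map Subtype.val e)
  · intro e he
    rw [mem_edgeFinset] at he
    induction e using Sym2.ind with
    | _ a b =>
      rw [mem_edgeSet] at he
      rw [Sym2.map_pair_eq, Finset.mem_filter, mem_edgeFinset, mem_edgeSet]
      refine ⟨he, ?_⟩
      intro x hx
      rcases Sym2.mem_iff.mp hx with rfl | rfl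
      · exact a.2
      · exact b.2
  · intro e1 h1 e2 h2 heq
    exact Sym2.map.injective Subtype.val_injective heq
  · intro e he
    rw [Finset.mem_filter, mem_edgeFinset] at he
    obtain ⟨heE, hU⟩ := he
    induction e using Sym2.ind with
    | _ a b =>
      have ha : a ∈ U := hU a (by simp)
      have hb : b ∈ U := hU b (by simp)
      rw [mem_edgeSet] at heE
      refine ⟨s(⟨a, ha⟩, ⟨b, hb⟩), ?_, ?_⟩
      · rw [mem_edgeFinset, mem_edgeSet]
        simpa using heE
      · simp [Sym2.map_pair_eq]

lemma reach_in_ball (hconn : G.Connected) {v a : A} {r : ℕ} (ha : a ∈ ball G v r) :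
    (G.induce (↑(ball G v r) : Set A)).Reachable ⟨v, Finset.mem_coe.mpr self_mem_ball⟩
      ⟨a, Finset.mem_coe.mpr ha⟩ := by
  obtain ⟨p, hp⟩ := hconn.exists_walk_length_eq_dist v a
  apply induce_reachable p
  intro x hx
  have h1 : G.dist v x ≤ (p.takeUntil x hx).length := SimpleGraph.dist_le _
  have h2 : (p.takeUntil x hx).length ≤ p.length := Walk.length_takeUntil_le p hx
  have ha' : G.dist v a ≤ r := mem_ball.mp ha
  have : x ∈ ball G v r := mem_ball.mpr (by omega)
  exact Finset.mem_coe.mpr this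

lemma ball_isTree (hconn : G.Connected) {r : ℕ}
    (hlen : ∀ (x : A) (c : G.Walk x x), c.IsCycle → 2 * r + 2 < c.length) (v : A) :
    eIn G (ball G v r) + 1 = (ball G v r).card := by
  have hconn' : (G.induce (↑(ball G v r) : Set A)).Connected := by
    rw [connected_iff]
    constructor
    · rintro ⟨a, ha⟩ ⟨b, hb⟩
      exact (reach_in_ball hconn (Finset.mem_coe.mp ha)).symm.trans
        (reach_in_ball hconn (Finset.mem_coe.mp hb))
    · exact ⟨⟨v, Finset.mem_coe.mpr (self_mem_ball : v ∈ ball G v r)⟩⟩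
  have hacyc : (G.induce (↑(ball G v r) : Set A)).IsAcyclic := by
    intro x c hc
    set femb := ((SimpleGraph.Embedding.induce (↑(ball G v r) : Set A)) :
      G.induce (↑(ball G v r) : Set A) ↪g G) with hfemb
    set f := femb.toHom with hf
    have hinj : Function.Injective f := femb.injective
    have hc' : (c.map f).IsCycle := (Walk.map_isCycle_iff_of_injective hinj).mpr hc
    apply no_cycle_in_ball hconn hlen (c.map f) hc' v
    intro y hy
    rw [Walk.support_map, List.mem_map] at hy
    obtain ⟨u, _, rfl⟩ := hy
    have : (u : A) ∈ ball G v r := by exact_mod_cast u.2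
    exact mem_ball.mp this
  have htree : (G.induce (↑(ball G v r) : Set A)).IsTree := ⟨hconn', hacyc⟩
  have hcount := htree.card_edgeFinset
  rw [card_edge_induce] at hcount
  rw [hcount]
  rw [← Set.toFinset_card, Finset.toFinset_coe]

end Induce

section Counting

lemma sum_degree_le (U W : Finset A) (hUW : U ⊆ W)
    (hN : ∀ u ∈ U, ∀ w, G.Adj u w → w ∈ W) :
    ∑ u ∈ U, G.degree u ≤ eIn G U + eIn G W := by
  have h1 : ∀ u ∈ U, G.degree u = (G.edgeFinset.filter (fun e => u ∈ e)).card := by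
    intro u _
    rw [← card_incidenceFinset_eq_degree, incidenceFinset_eq_filter]
  have hterm : ∀ e ∈ G.edgeFinset,
      (U.filter (fun u => u ∈ e)).card ≤
        ((if ∀ x ∈ e, x ∈ U then 1 else 0) + (if ∀ x ∈ e, x ∈ W then 1 else 0) : ℕ) := by
    intro e he
    rw [mem_edgeFinset] at he
    induction e using Sym2.ind with
    | _ a b =>
      have hadj : G.Adj a b := he
      by_cases ha : a ∈ U <;> by_cases hb : b ∈ U
      · have h2 : (∀ x ∈ s(a,b), x ∈ U) := by
          intro x hx; rcases Sym2.mem_iff.mp hx with rfl | rfl <;> assumption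
        have h3 : (∀ x ∈ s(a,b), x ∈ W) := fun x hx => hUW (h2 x hx)
        rw [if_pos h2, if_pos h3]
        calc (U.filter (fun u => u ∈ s(a,b))).card ≤ ({a, b} : Finset A).card := by
              apply Finset.card_le_card
              intro x hx
              rw [Finset.mem_filter] at hx
              rcases Sym2.mem_iff.mp hx.2 with rfl | rfl <;> simp
          _ ≤ 2 := Finset.card_insert_le _ _ |>.trans (by simp)
      · have h2 : ¬ (∀ x ∈ s(a,b), x ∈ U) := fun h => hb (h b (by simp))
        have h3 : (∀ x ∈ s(a,b), x ∈ W) := by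
          intro x hx
          rcases Sym2.mem_iff.mp hx with rfl | rfl
          · exact hUW ha
          · exact hN a ha x hadj
        rw [if_neg h2, if_pos h3]
        calc (U.filter (fun u => u ∈ s(a,b))).card ≤ ({a} : Finset A).card := by
              apply Finset.card_le_card
              intro x hx
              rw [Finset.mem_filter] at hx
              rcases Sym2.mem_iff.mp hx.2 with rfl | rfl
              · simp
              · exact absurd hx.1 hb
          _ ≤ 1 := by simp
      · have h2 : ¬ (∀ x ∈ s(a,b), x ∈ U) := fun h => ha (h a (by simp))
        have h3 : (∀ x ∈ s(a,b), x ∈ W) := by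
          intro x hx
          rcases Sym2.mem_iff.mp hx with rfl | rfl
          · exact hN b hb x hadj.symm
          · exact hUW hb
        rw [if_neg h2, if_pos h3]
        calc (U.filter (fun u => u ∈ s(a,b))).card ≤ ({b} : Finset A).card := by
              apply Finset.card_le_card
              intro x hx
              rw [Finset.mem_filter] at hx
              rcases Sym2.mem_iff.mp hx.2 with rfl | rfl
              · exact absurd hx.1 ha
              · simp
          _ ≤ 1 := by simp
      · have h4 : (U.filter (fun u => u ∈ s(a,b))) = ∅ := by
          rw [Finset.filter_eq_empty_iff]
          intro x hx hmem
          rcases Sym2.mem_iff.mp hmem with rfl | rfl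
          · exact ha hx
          · exact hb hx
        rw [h4]
        simp
  calc ∑ u ∈ U, G.degree u
      = ∑ u ∈ U, (G.edgeFinset.filter (fun e => u ∈ e)).card := Finset.sum_congr rfl h1
    _ = ∑ u ∈ U, ∑ e ∈ G.edgeFinset, (if u ∈ e then 1 else 0) := by
        refine Finset.sum_congr rfl fun u _ => ?_
        rw [Finset.card_filter]
    _ = ∑ e ∈ G.edgeFinset, ∑ u ∈ U, (if u ∈ e then 1 else 0) := Finset.sum_comm
    _ = ∑ e ∈ G.edgeFinset, (U.filter (fun u => u ∈ e)).card := by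
        refine Finset.sum_congr rfl fun e _ => ?_
        rw [Finset.card_filter]
    _ ≤ ∑ e ∈ G.edgeFinset,
          ((if ∀ x ∈ e, x ∈ U then 1 else 0) + (if ∀ x ∈ e, x ∈ W then 1 else 0) : ℕ) :=
        Finset.sum_le_sum hterm
    _ = eIn G U + eIn G W := by
        rw [Finset.sum_add_distrib, eIn, eIn, Finset.card_filter, Finset.card_filter]

lemma ball_grow (hconn : G.Connected) (hdeg : ∀ u : A, 2 ≤ G.degree u) (v : A) {R : ℕ}
    (htree : ∀ j, j ≤ R → eIn G (ball G v j) + 1 = (ball G v j).card)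
    {j : ℕ} (hj : j + 1 ≤ R) : (ball G v j).card + 2 ≤ (ball G v (j + 1)).card := by
  have hsum : ∑ u ∈ ball G v j, G.degree u ≤ eIn G (ball G v j) + eIn G (ball G v (j+1)) :=
    sum_degree_le _ _ (ball_mono (by omega)) (fun u hu w hw => adj_ball hconn hu hw)
  have h2 : 2 * (ball G v j).card ≤ ∑ u ∈ ball G v j, G.degree u := by
    calc 2 * (ball G v j).card = ∑ _u ∈ ball G v j, 2 := by
          rw [Finset.sum_const, smul_eq_mul, mul_comm]
      _ ≤ _ := Finset.sum_le_sum (fun u _ => hdeg u)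
  have e1 := htree j (by omega)
  have e2 := htree (j+1) hj
  omega

lemma ball_card_lb (hconn : G.Connected) (hdeg : ∀ u : A, 2 ≤ G.degree u) (v : A) {R : ℕ}
    (htree : ∀ j, j ≤ R → eIn G (ball G v j) + 1 = (ball G v j).card) :
    ∀ j, j ≤ R → 2 * j + 1 ≤ (ball G v j).card := by
  intro j
  induction j with
  | zero =>
    intro _
    have := Finset.card_pos.mpr ⟨v, (self_mem_ball : v ∈ ball G v 0)⟩
    omega
  | succ j ih =>
    intro hj
    have h1 := ih (by omega)
    have h2 := ball_grow hconn hdeg v htree hj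
    omega

lemma local_excess (hconn : G.Connected) (hdeg : ∀ u : A, 2 ≤ G.degree u) (v : A) {t : ℕ}
    (htree : ∀ j, j ≤ 2*t+1 → eIn G (ball G v j) + 1 = (ball G v j).card) :
    (t + 1) * (∑ u ∈ ball G v t, (G.degree u - 2)) ≤ Fintype.card A := by
  set X := ∑ u ∈ ball G v t, (G.degree u - 2) with hX
  have hstep : ∀ ρ, t ≤ ρ → ρ + 1 ≤ 2*t+1 →
      X + (ball G v ρ).card + 2 ≤ (ball G v (ρ+1)).card := by
    intro ρ hρ1 hρ2
    have hsub : X ≤ ∑ u ∈ ball G v ρ, (G.degree u - 2) :=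
      Finset.sum_le_sum_of_subset (ball_mono hρ1)
    have hsum1 : ∑ u ∈ ball G v ρ, (G.degree u - 2) + 2 * (ball G v ρ).card
        = ∑ u ∈ ball G v ρ, G.degree u := by
      calc ∑ u ∈ ball G v ρ, (G.degree u - 2) + 2 * (ball G v ρ).card
          = ∑ u ∈ ball G v ρ, ((G.degree u - 2) + 2) := by
            rw [Finset.sum_add_distrib, Finset.sum_const, smul_eq_mul, mul_comm]
        _ = ∑ u ∈ ball G v ρ, G.degree u :=
            Finset.sum_congr rfl (fun u _ => Nat.sub_add_cancel (hdeg u))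
    have hle : ∑ u ∈ ball G v ρ, G.degree u ≤ eIn G (ball G v ρ) + eIn G (ball G v (ρ+1)) :=
      sum_degree_le _ _ (ball_mono (by omega)) (fun u hu w hw => adj_ball hconn hu hw)
    have e1 := htree ρ (by omega)
    have e2 := htree (ρ+1) (by omega)
    omega
  have hiter : ∀ l, l ≤ t+1 → l * (X + 2) + (ball G v t).card ≤ (ball G v (t+l)).card := by
    intro l
    induction l with
    | zero => simp
    | succ l ih =>
      intro hl
      have h1 := ih (by omega)
      have h2 := hstep (t+l) (by omega) (by omega)
      have h3 : t + (l+1) = (t+l)+1 := by omega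
      rw [h3]
      have h4 : (l+1) * (X+2) = l*(X+2) + (X+2) := by ring
      omega
  have hfin := hiter (t+1) le_rfl
  have hcard : (ball G v (t+(t+1))).card ≤ Fintype.card A := by
    simpa [Finset.card_univ] using Finset.card_le_card (Finset.subset_univ (ball G v (t+(t+1))))
  have h5 : (t+1)*(X+2) = (t+1)*X + 2*(t+1) := by ring
  omega

lemma sum_biUnion_le {β : Type} [DecidableEq β] (T : Finset β) (g : β → Finset A) (f : A → ℕ) :
    ∑ a ∈ T.biUnion g, f a ≤ ∑ b ∈ T, ∑ a ∈ g b, f a := by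
  induction T using Finset.induction with
  | empty => simp
  | @insert b T hb ih =>
    rw [Finset.biUnion_insert, Finset.sum_insert hb]
    have hu : ∑ a ∈ g b ∪ T.biUnion g, f a ≤ ∑ a ∈ g b, f a + ∑ a ∈ T.biUnion g, f a := by
      rw [← Finset.union_sdiff_self_eq_union, Finset.sum_union Finset.sdiff_disjoint.symm]
      exact Nat.add_le_add_left (Finset.sum_le_sum_of_subset (Finset.sdiff_subset)) _
    exact hu.trans (Nat.add_le_add_left ih _)

lemma exists_cover (t : ℕ) (S : Finset A) :
    ∃ S' : Finset A, S' ⊆ S ∧ (∀ a ∈ S', ∀ b ∈ S', a ≠ b → t < G.dist a b) ∧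
      ∀ u ∈ S, ∃ v ∈ S', G.dist v u ≤ t := by
  induction S using Finset.strongInduction with
  | _ S ih =>
    rcases S.eq_empty_or_nonempty with rfl | ⟨u, hu⟩
    · exact ⟨∅, by simp, by simp, by simp⟩
    · have hss : S.filter (fun w => t < G.dist u w) ⊂ S := by
        rw [Finset.filter_ssubset]
        exact ⟨u, hu, by simp [SimpleGraph.dist_self]⟩
      obtain ⟨S'', hsub, hpair, hcov⟩ := ih _ hss
      refine ⟨insert u S'', ?_, ?_, ?_⟩
      · intro a ha
        rcases Finset.mem_insert.mp ha with rfl | ha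
        · exact hu
        · exact (Finset.filter_subset _ _) (hsub ha)
      · intro a ha b hb hab
        rcases Finset.mem_insert.mp ha with ha' | ha'
        · rcases Finset.mem_insert.mp hb with hb' | hb'
          · exact absurd (ha'.trans hb'.symm) hab
          · subst ha'
            exact (Finset.mem_filter.mp (hsub hb')).2
        · rcases Finset.mem_insert.mp hb with hb' | hb'
          · subst hb'
            rw [SimpleGraph.dist_comm]
            exact (Finset.mem_filter.mp (hsub ha')).2
          · exact hpair a ha' b hb' hab
      · intro w hw
        by_cases hcase : t < G.dist u w
        · obtain ⟨v', hv', hvd⟩ := hcov w (Finset.mem_filter.mpr ⟨hw, hcase⟩)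
          exact ⟨v', Finset.mem_insert_of_mem hv', hvd⟩
        · exact ⟨u, Finset.mem_insert_self _ _, by omega⟩

end Counting



section Core

lemma core (hconn : G.Connected) (hdeg : ∀ u : A, 2 ≤ G.degree u) {s : ℕ} (hs : 4 ≤ s)
    (hcyc : ∀ (x : A) (c : G.Walk x x), c.IsCycle → 2 * s < c.length) :
    Fintype.card A ≤ G.edgeFinset.card ∧ 2 * s + 1 ≤ Fintype.card A ∧
      2 * (G.edgeFinset.card - Fintype.card A) * ((s / 2) * (2 * ((s / 2 - 1) / 2) + 1))
        ≤ Fintype.card A * Fintype.card A := by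
  set n := Fintype.card A with hn
  set m := G.edgeFinset.card with hm
  set t := s / 2 - 1 with ht
  set q := t / 2 with hq
  have hsumdeg := G.sum_degrees_eq_twice_card_edges
  have hmn : n ≤ m := by
    have h2 : 2 * n ≤ ∑ v : A, G.degree v := by
      calc 2 * n = ∑ _v : A, 2 := by
            rw [Finset.sum_const, smul_eq_mul, Finset.card_univ, ← hn, mul_comm]
        _ ≤ _ := Finset.sum_le_sum (fun u _ => hdeg u)
    omega
  obtain ⟨x0, c0, hc0⟩ : ∃ (x : A) (c : G.Walk x x), c.IsCycle := by
    by_contra h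
    push_neg at h
    have hacyc : G.IsAcyclic := fun v c hc => h v c hc
    have htree : G.IsTree := ⟨hconn, hacyc⟩
    have := htree.card_edgeFinset
    omega
  have hn2s : 2 * s + 1 ≤ n := by
    have h1 := hcyc x0 c0 hc0
    have h2 : c0.support.tail.length ≤ n := by
      have := hc0.support_nodup.length_le_card
      omega
    have h3 : c0.support.length = c0.length + 1 := Walk.length_support c0
    have h4 : c0.support.tail.length = c0.support.length - 1 := by
      simp [List.length_tail]
    omega
  have htree : ∀ (v : A) (j : ℕ), j ≤ 2*t+1 → eIn G (ball G v j) + 1 = (ball G v j).card := by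
    intro v j hj
    apply ball_isTree hconn ?_ v
    intro x c hc
    have h1 := hcyc x c hc
    have hdiv : 2 * (s/2) ≤ s := by omega
    omega
  have hlocal : ∀ v : A, (t+1) * (∑ u ∈ ball G v t, (G.degree u - 2)) ≤ n :=
    fun v => local_excess hconn hdeg v (htree v)
  have hblb : ∀ v : A, 2*q+1 ≤ (ball G v q).card := by
    intro v
    exact ball_card_lb hconn hdeg v (htree v) q (by omega)
  set S := univ.filter (fun u : A => 3 ≤ G.degree u) with hS
  have hsum2k : ∑ u ∈ S, (G.degree u - 2) = 2 * (m - n) := by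
    have h1 : ∑ u ∈ S, (G.degree u - 2) = ∑ u : A, (G.degree u - 2) := by
      rw [hS]
      apply Finset.sum_filter_of_ne
      intro x _ hx
      have := hdeg x
      omega
    have h3 : ∑ u : A, ((G.degree u - 2) + 2) = ∑ u : A, G.degree u :=
      Finset.sum_congr rfl (fun u _ => Nat.sub_add_cancel (hdeg u))
    rw [Finset.sum_add_distrib, Finset.sum_const, smul_eq_mul, Finset.card_univ, ← hn] at h3
    omega
  obtain ⟨S', hS'sub, hS'pair, hS'cov⟩ := exists_cover (G := G) t S
  have hcover : ∑ u ∈ S, (G.degree u - 2) ≤ ∑ v ∈ S', ∑ u ∈ ball G v t, (G.degree u - 2) := by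
    have h1 : S ⊆ S'.biUnion (fun v => ball G v t) := by
      intro u hu
      obtain ⟨v, hv, hd⟩ := hS'cov u hu
      exact Finset.mem_biUnion.mpr ⟨v, hv, mem_ball.mpr hd⟩
    exact (Finset.sum_le_sum_of_subset h1).trans (sum_biUnion_le S' _ _)
  have hpack : S'.card * (2*q+1) ≤ n := by
    have hdisj : ∀ a ∈ S', ∀ b ∈ S', a ≠ b → Disjoint (ball G a q) (ball G b q) := by
      intro a ha b hb hab
      rw [Finset.disjoint_left]
      intro u hua hub
      have h1 : G.dist a u ≤ q := mem_ball.mp hua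
      have h2 : G.dist b u ≤ q := mem_ball.mp hub
      have h3 : G.dist a b ≤ G.dist a u + G.dist u b := hconn.dist_triangle
      have h4 : G.dist u b = G.dist b u := SimpleGraph.dist_comm
      have h5 := hS'pair a ha b hb hab
      omega
    calc S'.card * (2*q+1) = ∑ _v ∈ S', (2*q+1) := by
          rw [Finset.sum_const, smul_eq_mul]
      _ ≤ ∑ v ∈ S', (ball G v q).card := Finset.sum_le_sum (fun v _ => hblb v)
      _ = (S'.biUnion (fun v => ball G v q)).card := (Finset.card_biUnion hdisj).symm
      _ ≤ n := by
          rw [hn, ← Finset.card_univ]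
          exact Finset.card_le_card (Finset.subset_univ _)
  have h5 : (t+1) * (2*(m-n)) ≤ S'.card * n := by
    calc (t+1) * (2*(m-n)) = (t+1) * (∑ u ∈ S, (G.degree u - 2)) := by rw [hsum2k]
      _ ≤ (t+1) * (∑ v ∈ S', ∑ u ∈ ball G v t, (G.degree u - 2)) :=
          Nat.mul_le_mul_left _ hcover
      _ = ∑ v ∈ S', (t+1) * (∑ u ∈ ball G v t, (G.degree u - 2)) := Finset.mul_sum _ _ _
      _ ≤ ∑ _v ∈ S', n := Finset.sum_le_sum (fun v _ => hlocal v)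
      _ = S'.card * n := by rw [Finset.sum_const, smul_eq_mul]
  refine ⟨hmn, hn2s, ?_⟩
  have e1 : s / 2 = t + 1 := by omega
  rw [e1]
  calc 2 * (m - n) * ((t+1) * (2*q+1)) = ((t+1) * (2*(m-n))) * (2*q+1) := by ring
    _ ≤ (S'.card * n) * (2*q+1) := Nat.mul_le_mul_right _ h5
    _ = (S'.card * (2*q+1)) * n := by ring
    _ ≤ n * n := Nat.mul_le_mul_right _ hpack

lemma arith {k n s : ℕ} (hs : 4 ≤ s) (hn : 2 * s + 1 ≤ n)
    (h : 2 * k * ((s / 2) * (2 * ((s / 2 - 1) / 2) + 1)) ≤ n * n) :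
    (k : ℝ) + 1 ≤ 4 * (n : ℝ) ^ 2 / ((s : ℝ) - 2) ^ 2 := by
  obtain ⟨a, rfl⟩ : ∃ a, s = a + 4 := ⟨s - 4, by omega⟩
  have hkey : 2 * k * ((a + 3) * (a + 1)) ≤ 4 * (n * n) := by
    have e1 : (a + 3) * (a + 1) ≤ (2 * ((a+4) / 2)) * (2 * (2 * (((a+4) / 2 - 1) / 2) + 1)) := by
      apply Nat.mul_le_mul <;> omega
    calc 2 * k * ((a+3) * (a+1))
        ≤ 2 * k * ((2 * ((a+4)/2)) * (2 * (2 * (((a+4)/2 - 1)/2) + 1))) :=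
          Nat.mul_le_mul_left _ e1
      _ = 4 * (2 * k * (((a+4)/2) * (2 * (((a+4)/2 - 1)/2) + 1))) := by ring
      _ ≤ 4 * (n * n) := Nat.mul_le_mul_left _ h
  have hkeyR : 2 * (k:ℝ) * (((a:ℝ) + 3) * ((a:ℝ) + 1)) ≤ 4 * ((n:ℝ) * (n:ℝ)) := by
    exact_mod_cast hkey
  have hnR : 2 * ((a:ℝ) + 4) + 1 ≤ (n:ℝ) := by exact_mod_cast hn
  have hk0 : (0:ℝ) ≤ (k:ℝ) := Nat.cast_nonneg k
  have ha0 : (0:ℝ) ≤ (a:ℝ) := Nat.cast_nonneg a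
  have hspos : (0:ℝ) < (((a:ℝ) + 4) - 2)^2 := by nlinarith
  have hka : (0:ℝ) ≤ (k:ℝ) * ((a:ℝ)*(a:ℝ) + 4*(a:ℝ)) := by positivity
  have hK : 3 * (k:ℝ) ≤ 2 * ((n:ℝ)*(n:ℝ)) := by nlinarith [hkeyR, hka]
  have h6 : (0:ℝ) ≤ ((n:ℝ) - (2*(a:ℝ)+4)) := by linarith
  have h7 : (0:ℝ) ≤ ((n:ℝ) + (2*(a:ℝ)+4)) := by linarith
  have h4sq : 4 * ((a:ℝ)+2)^2 ≤ (n:ℝ)*(n:ℝ) := by nlinarith [mul_nonneg h6 h7]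
  have hstep : (k:ℝ) * (((a:ℝ)+2)^2) ≤ 2*((n:ℝ)*(n:ℝ)) + (k:ℝ) := by nlinarith [hkeyR]
  have htarget : ((k:ℝ) + 1) * (((a:ℝ)+4) - 2)^2 ≤ 4 * (n:ℝ)^2 := by nlinarith [hstep, hK, h4sq]
  push_cast
  rw [le_div_iff₀ hspos]
  exact htarget

end Core


section Peel

lemma eIn_erase (v : A) : eIn G (univ.erase v) + G.degree v = G.edgeFinset.card := by
  have hdeg : G.degree v = (G.edgeFinset.filter (fun e => v ∈ e)).card := by
    rw [← card_incidenceFinset_eq_degree, incidenceFinset_eq_filter]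
  have hsplit := Finset.card_filter_add_card_filter_not
    (s := G.edgeFinset) (p := fun e => v ∈ e)
  have hcongr : eIn G (univ.erase v) = (G.edgeFinset.filter (fun e => ¬ v ∈ e)).card := by
    rw [eIn]
    congr 1
    apply Finset.filter_congr
    intro e _
    constructor
    · intro h hv
      simpa using h v hv
    · intro h x hx
      rw [Finset.mem_erase]
      exact ⟨fun hxv => h (hxv ▸ hx), Finset.mem_univ x⟩
  omega

lemma degree_pos_of_connected (hconn : G.Connected) (h2 : 2 ≤ Fintype.card A) (v : A) :
    1 ≤ G.degree v := by
  obtain ⟨u, hu⟩ : ∃ u : A, u ≠ v := Fintype.exists_ne_of_one_lt_card (by omega) v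
  obtain ⟨p⟩ := hconn.preconnected v u
  have hnn : ¬ p.Nil := Walk.not_nil_of_ne (Ne.symm hu)
  obtain ⟨x, hvx, q, hq⟩ := Walk.not_nil_iff.mp hnn
  have hx : x ∈ G.neighborFinset v := by rw [mem_neighborFinset]; exact hvx
  have := Finset.card_pos.mpr ⟨x, hx⟩
  rw [card_neighborFinset_eq_degree] at this
  omega

lemma peel_connected (hconn : G.Connected) {v : A} (hdegv : G.degree v = 1)
    (h2 : 2 ≤ Fintype.card A) :
    (G.induce (↑(univ.erase v) : Set A)).Connected := by
  rw [connected_iff]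
  constructor
  · rintro ⟨a, ha⟩ ⟨b, hb⟩
    have ha' : a ≠ v := (Finset.mem_erase.mp (Finset.mem_coe.mp ha)).1
    have hb' : b ≠ v := (Finset.mem_erase.mp (Finset.mem_coe.mp hb)).1
    obtain ⟨p0⟩ := hconn.preconnected a b
    set p := p0.bypass with hp
    have hpath : p.IsPath := Walk.bypass_isPath p0
    have hvp : v ∉ p.support := by
      intro hv
      have hva : v ≠ a := Ne.symm ha'
      have hvb : v ≠ b := Ne.symm hb'
      set q1 := p.takeUntil v hv with hq1def
      set q2 := p.dropUntil v hv with hq2def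
      have hnn1 : ¬ q1.reverse.Nil := Walk.not_nil_of_ne hva
      obtain ⟨x, hvx, r1, hr1⟩ := Walk.not_nil_iff.mp hnn1
      have hnn2 : ¬ q2.Nil := Walk.not_nil_of_ne hvb
      obtain ⟨y, hvy, r2, hr2⟩ := Walk.not_nil_iff.mp hnn2
      have hxq1 : x ∈ q1.support := by
        have : x ∈ q1.reverse.support := by
          rw [hr1]
          simp [Walk.support_cons, r1.start_mem_support]
        simpa using this
      have hyq2 : y ∈ q2.support.tail := by
        rw [hr2]
        simpa using r2.start_mem_support
      have hsupp : p.support = q1.support ++ q2.support.tail := by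
        rw [← Walk.support_append, Walk.take_spec]
      have hnd : p.support.Nodup := hpath.support_nodup
      rw [hsupp] at hnd
      have hdisj := (List.nodup_append.mp hnd).2.2
      have hxy : x ≠ y := fun h => hdisj x hxq1 x (h ▸ hyq2) rfl
      have hsub : ({x, y} : Finset A) ⊆ G.neighborFinset v := by
        intro z hz
        rcases Finset.mem_insert.mp hz with rfl | hz
        · rw [mem_neighborFinset]; exact hvx
        · rw [Finset.mem_singleton] at hz
          subst hz
          rw [mem_neighborFinset]; exact hvy
      have hc2 : 2 ≤ (G.neighborFinset v).card := by
        calc 2 = ({x, y} : Finset A).card := by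
              rw [Finset.card_insert_of_notMem (by simp [hxy]), Finset.card_singleton]
          _ ≤ _ := Finset.card_le_card hsub
      rw [card_neighborFinset_eq_degree] at hc2
      omega
    exact induce_reachable p
      (fun x hx => Finset.mem_coe.mpr
        (Finset.mem_erase.mpr ⟨fun h => hvp (by rw [← h]; exact hx), Finset.mem_univ x⟩))
      (Finset.mem_coe.mp ha) (Finset.mem_coe.mp hb)
  · obtain ⟨u, hu⟩ : ∃ u : A, u ≠ v := Fintype.exists_ne_of_one_lt_card (by omega) v
    exact ⟨⟨u, Finset.mem_coe.mpr (Finset.mem_erase.mpr ⟨hu, Finset.mem_univ u⟩)⟩⟩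

end Peel

lemma main : ∀ (N : ℕ) (A : Type) [Fintype A] (G : SimpleGraph A),
    Fintype.card A ≤ N → ∀ s : ℕ, 4 ≤ s → G.Connected →
    (∀ (x : A) (c : G.Walk x x), c.IsCycle → 2 * s < c.length) →
    (Nat.card G.edgeSet : ℝ) - (Fintype.card A : ℝ) + 1
      ≤ 4 * (Fintype.card A : ℝ) ^ 2 / ((s : ℝ) - 2) ^ 2 := by
  intro N
  induction N with
  | zero =>
    intro A _ G hcard s hs hconn hcyc
    have : 0 < Fintype.card A := Fintype.card_pos_iff.mpr hconn.nonempty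
    omega
  | succ N ih =>
    intro A _ G hcard s hs hconn hcyc
    have hs4 : (4:ℝ) ≤ (s:ℝ) := by exact_mod_cast hs
    have hspos : (0:ℝ) < ((s:ℝ) - 2)^2 := by nlinarith
    have hmcard : (Nat.card G.edgeSet) = G.edgeFinset.card := by
      rw [Nat.card_eq_fintype_card, G.edgeFinset_card]
    by_cases hdeg : ∀ u : A, 2 ≤ G.degree u
    · obtain ⟨hmn, hn2s, hineq⟩ := core hconn hdeg hs hcyc
      have harith := arith hs hn2s hineq
      rw [hmcard]
      have hcast : (G.edgeFinset.card : ℝ) - (Fintype.card A : ℝ) + 1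
          = ((G.edgeFinset.card - Fintype.card A : ℕ) : ℝ) + 1 := by
        rw [Nat.cast_sub hmn]
      rw [hcast]
      exact harith
    · push_neg at hdeg
      obtain ⟨v, hv⟩ := hdeg
      by_cases hA : Fintype.card A ≤ 1
      · have h1 : Fintype.card A = 1 := by
          have : 0 < Fintype.card A := Fintype.card_pos_iff.mpr hconn.nonempty
          omega
        have hm0 : G.edgeSet = ∅ := by
          rw [Set.eq_empty_iff_forall_notMem]
          intro e he
          induction e using Sym2.ind with
          | _ a b =>
            rw [mem_edgeSet] at he
            exact he.ne (Fintype.card_le_one_iff.mp (by omega) a b)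
        have hz : (Nat.card (↥(∅ : Set (Sym2 A)))) = 0 := by simp
        rw [hm0, hz, h1]
        norm_num
        positivity
      · push_neg at hA
        have hA2 : 2 ≤ Fintype.card A := hA
        have hdegv1 : G.degree v = 1 := by
          have := degree_pos_of_connected hconn hA2 v
          omega
        set Sv : Set A := (↑(univ.erase v) : Set A) with hSv
        have hconn' := peel_connected hconn hdegv1 hA2
        have hcyc' : ∀ (x : ↥Sv) (c : (G.induce Sv).Walk x x), c.IsCycle → 2*s < c.length := by
          intro x c hc
          set femb := ((SimpleGraph.Embedding.induce Sv) : G.induce Sv ↪g G) with hfemb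
          have hc' : (c.map femb.toHom).IsCycle :=
            (Walk.map_isCycle_iff_of_injective femb.injective).mpr hc
          have h2 := hcyc _ _ hc'
          rwa [Walk.length_map] at h2
        have hcard' : Fintype.card ↥Sv = Fintype.card A - 1 := by
          show Fintype.card ↥(↑(univ.erase v) : Set A) = _
          rw [← Set.toFinset_card, Finset.toFinset_coe,
            Finset.card_erase_of_mem (Finset.mem_univ v), Finset.card_univ]
        have hrec := ih ↥Sv (G.induce Sv) (by omega) s hs hconn' hcyc'
        have hm' : Nat.card (G.induce Sv).edgeSet = G.edgeFinset.card - 1 := by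
          have h1 : Nat.card (G.induce Sv).edgeSet = (G.induce Sv).edgeFinset.card := by
            rw [Nat.card_eq_fintype_card, (G.induce Sv).edgeFinset_card]
          have h3 : (G.induce (↑(univ.erase v) : Set A)).edgeFinset.card
              = eIn G (univ.erase v) := card_edge_induce _
          have h2 := eIn_erase (G := G) v
          rw [h1]
          show (G.induce (↑(univ.erase v) : Set A)).edgeFinset.card = _
          omega
        rw [hmcard]
        have hm1 : 1 ≤ G.edgeFinset.card := by
          have h2 := eIn_erase (G := G) v
          omega
        have c1 : ((Nat.card (G.induce Sv).edgeSet : ℕ) : ℝ) = (G.edgeFinset.card : ℝ) - 1 := by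
          rw [hm', Nat.cast_sub hm1]
          norm_num
        have c2 : ((Fintype.card ↥Sv : ℕ) : ℝ) = (Fintype.card A : ℝ) - 1 := by
          rw [hcard', Nat.cast_sub (by omega)]
          norm_num
        rw [c1, c2] at hrec
        have hn2R : (2:ℝ) ≤ (Fintype.card A : ℝ) := by exact_mod_cast hA2
        have hnum : 4 * ((Fintype.card A : ℝ) - 1)^2 ≤ 4 * (Fintype.card A : ℝ)^2 := by
          nlinarith
        have hmono : 4 * ((Fintype.card A : ℝ) - 1)^2 / ((s:ℝ)-2)^2
            ≤ 4 * (Fintype.card A : ℝ)^2 / ((s:ℝ)-2)^2 :=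
          by
          exact (div_le_div_iff_of_pos_right hspos).mpr hnum
        calc (G.edgeFinset.card : ℝ) - (Fintype.card A : ℝ) + 1
            = ((G.edgeFinset.card : ℝ) - 1) - ((Fintype.card A : ℝ) - 1) + 1 := by ring
          _ ≤ 4 * ((Fintype.card A : ℝ) - 1)^2 / ((s:ℝ)-2)^2 := hrec
          _ ≤ _ := hmono

end Stmt2Aux

open Stmt2Aux

/-- If a finite connected graph (the induced subgraph `G_A` on a vertex set `A`)
has girth greater than `2s` with `s ≥ 4`, then its tree excess
`|E_A| - |A| + 1` is at most `|A|² / (s/2 - 1)²`. -/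
theorem stmt_2 {A : Type} [Fintype A] (G : SimpleGraph A) (s : ℕ) (hs : 4 ≤ s)
    (hconn : G.Connected) (hgirth : (2 * s : ℕ∞) < G.girth) :
    (Nat.card G.edgeSet : ℝ) - (Fintype.card A : ℝ) + 1
      ≤ (Fintype.card A : ℝ) ^ 2 / ((s : ℝ) / 2 - 1) ^ 2 := by
  classical
  have hne : G.egirth ≠ ⊤ := by
    intro htop
    unfold SimpleGraph.girth at hgirth
    rw [htop] at hgirth
    simp at hgirth
  have hgirth' : (2 * s : ℕ∞) < G.egirth := by
    unfold SimpleGraph.girth at hgirth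
    rwa [ENat.coe_toNat hne] at hgirth
  have hcyc : ∀ (x : A) (c : G.Walk x x), c.IsCycle → 2 * s < c.length := by
    intro x c hc
    have h1 : G.egirth ≤ (c.length : ℕ∞) := SimpleGraph.le_egirth.mp le_rfl x c hc
    have h2 : (2 * s : ℕ∞) < (c.length : ℕ∞) := lt_of_lt_of_le hgirth' h1
    exact_mod_cast h2
  have hmain := Stmt2Aux.main (Fintype.card A) A G le_rfl s hs hconn hcyc
  have hrw : ((s : ℝ) / 2 - 1) ^ 2 = ((s : ℝ) - 2) ^ 2 / 4 := by ring
  rw [hrw, div_div_eq_mul_div]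
  have hrw2 : (Fintype.card A : ℝ) ^ 2 * 4 / ((s : ℝ) - 2) ^ 2
      = 4 * (Fintype.card A : ℝ) ^ 2 / ((s : ℝ) - 2) ^ 2 := by ring
  rw [hrw2]
  exact hmain
end

section
/- Let G be a finite d-regular graph on n vertices (d ≥ 3) such that every ball of radius s contains at most one cycle, and let A be a connected set of vertices with |A| ≤ κ·s for some κ ≥ 1, where s is the cycle-radius parameter. Then the number of distinct short cycles (cycles of length at most 2s) contained in the induced subgraph on A is at most κ. -/
open SimpleGraph

/-- The ball of radius `r` around `x` in the graph distance of `G`. -/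
def gBall {V : Type} (G : SimpleGraph V) (x : V) (r : ℕ) : Set V :=
  {y | G.dist x y ≤ r}

/-- A set of vertices `C` is a cycle (as a subgraph) if it is finite, nonempty,
induces a connected subgraph, and every vertex of `C` has exactly two
neighbours inside `C`. -/
def IsCycleSet {V : Type} (G : SimpleGraph V) (C : Set V) : Prop :=
  C.Finite ∧ C.Nonempty ∧ (G.induce C).Connected ∧
    ∀ v ∈ C, Nat.card {w : V // w ∈ C ∧ G.Adj v w} = 2

lemma cross_lemma {W : Type} {H : SimpleGraph W} (P : W → Prop) {u v : W}
    (w : H.Walk u v) (hu : P u) (hv : ¬ P v) :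
    ∃ a b, H.Adj a b ∧ P a ∧ ¬ P b := by
  induction w with
  | nil => exact absurd hu hv
  | @cons a b c h q ih =>
    by_cases hm : P b
    · exact ih hm hv
    · exact ⟨a, b, h, hu, hm⟩


lemma even_card_swap {α : Type} [DecidableEq α] (s : Finset (α × α))
    (hswap : ∀ p ∈ s, Prod.swap p ∈ s) (hne : ∀ p ∈ s, p.1 ≠ p.2) :
    Even s.card := by
  induction s using Finset.strongInduction with
  | _ s ih =>
    rcases s.eq_empty_or_nonempty with rfl | ⟨p, hp⟩
    · simp
    · have hps : Prod.swap p ∈ s := hswap p hp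
      have hpp : p ≠ Prod.swap p := by
        intro h
        apply hne p hp
        have h1 : p.1 = p.2 := congrArg Prod.fst h
        exact h1
      have hsub : {p, Prod.swap p} ⊆ s := by
        intro q hq
        simp only [Finset.mem_insert, Finset.mem_singleton] at hq
        rcases hq with rfl | rfl <;> assumption
      have hcard : ({p, Prod.swap p} : Finset (α × α)).card = 2 :=
        Finset.card_pair hpp
      have hlt : s \ {p, Prod.swap p} ⊂ s := by
        apply Finset.sdiff_ssubset hsub
        simp
      have hev : Even (s \ {p, Prod.swap p}).card := by
        apply ih _ hlt
        · intro q hq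
          simp only [Finset.mem_sdiff, Finset.mem_insert, Finset.mem_singleton] at hq ⊢
          refine ⟨hswap q hq.1, ?_⟩
          rintro (h | h)
          · exact hq.2 (Or.inr (by simpa using congrArg Prod.swap h))
          · exact hq.2 (Or.inl (by simpa using congrArg Prod.swap h))
        · intro q hq
          exact hne q (Finset.mem_sdiff.mp hq).1
      have hc : s.card = (s \ {p, Prod.swap p}).card + 2 := by
        rw [Finset.card_sdiff_of_subset hsub, hcard]
        have := Finset.card_le_card hsub
        rw [hcard] at this
        omega
      rw [hc]
      rcases hev with ⟨k, hk⟩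
      exact ⟨k + 1, by omega⟩

lemma half_diam {W : Type} [Fintype W] (H : SimpleGraph W) (hconn : H.Connected)
    (hreg : ∀ v : W, Nat.card (H.neighborSet v) = 2) (x y : W) :
    2 * H.dist x y ≤ Fintype.card W := by
  classical
  set D := H.dist x y with hD
  have hdeg : ∀ v, H.degree v = 2 := by
    intro v
    rw [← card_neighborSet_eq_degree, ← Nat.card_eq_fintype_card]
    exact hreg v
  have hadj1 : ∀ a b : W, H.Adj a b → H.dist x b ≤ H.dist x a + 1 := by
    intro a b hab
    have := hconn.dist_triangle (u := x) (v := a) (w := b)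
    rwa [dist_eq_one_iff_adj.mpr hab] at this
  set F : ℕ → Finset (W × W) := fun t =>
    Finset.univ.filter (fun p => H.dist x p.1 ≤ t ∧ ¬ (H.dist x p.2 ≤ t) ∧ H.Adj p.1 p.2)
    with hF
  have hFd : ∀ t, ∀ p ∈ F t, H.dist x p.1 = t ∧ H.dist x p.2 = t + 1 := by
    intro t p hp
    simp only [hF, Finset.mem_filter, Finset.mem_univ, true_and] at hp
    obtain ⟨h1, h2, h3⟩ := hp
    have ha := hadj1 _ _ h3
    have hb := hadj1 _ _ h3.symm
    omega
  have hF1 : ∀ t < D, (F t).Nonempty := by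
    intro t ht
    obtain ⟨w⟩ := hconn.preconnected x y
    obtain ⟨a, b, hab, ha, hb⟩ := cross_lemma (fun z => H.dist x z ≤ t) w
      (by simp [SimpleGraph.dist_self]) (by simp only [hD] at ht; omega)
    refine ⟨(a, b), ?_⟩
    simp only [hF, Finset.mem_filter, Finset.mem_univ, true_and]
    exact ⟨ha, hb, hab⟩
  have hF2 : ∀ t, Even (F t).card := by
    intro t
    set B : Finset W := Finset.univ.filter (fun u => H.dist x u ≤ t) with hB
    set I : Finset (W × W) := Finset.univ.filter
      (fun p => H.dist x p.1 ≤ t ∧ H.dist x p.2 ≤ t ∧ H.Adj p.1 p.2) with hI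
    have hIe : Even I.card := by
      apply even_card_swap
      · intro p hp
        simp only [hI, Finset.mem_filter, Finset.mem_univ, true_and] at hp ⊢
        exact ⟨hp.2.1, hp.1, hp.2.2.symm⟩
      · intro p hp
        simp only [hI, Finset.mem_filter, Finset.mem_univ, true_and] at hp
        exact hp.2.2.ne
    have hsum : (F t).card + I.card = ∑ u ∈ B, H.degree u := by
      rw [hF, hI, Finset.card_filter, Finset.card_filter]
      rw [Fintype.sum_prod_type, Fintype.sum_prod_type, ← Finset.sum_add_distrib]
      have : ∀ u : W, ((∑ v : W, if H.dist x u ≤ t ∧ ¬H.dist x v ≤ t ∧ H.Adj u v then 1 else 0)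
          + ∑ v : W, if H.dist x u ≤ t ∧ H.dist x v ≤ t ∧ H.Adj u v then 1 else 0)
          = if H.dist x u ≤ t then H.degree u else 0 := by
        intro u
        rw [← Finset.sum_add_distrib]
        by_cases hu : H.dist x u ≤ t
        · simp only [hu, true_and, if_true]
          have h1 : ∀ v : W, ((if ¬H.dist x v ≤ t ∧ H.Adj u v then 1 else 0)
              + (if H.dist x v ≤ t ∧ H.Adj u v then 1 else 0)) = if H.Adj u v then 1 else 0 := by
            intro v
            by_cases h1 : H.dist x v ≤ t <;> by_cases h2 : H.Adj u v <;> simp [h1, h2]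
          rw [Finset.sum_congr rfl (fun v _ => h1 v), ← Finset.card_filter,
            ← neighborFinset_eq_filter]
          rfl
        · simp [hu]
      rw [Finset.sum_congr rfl (fun u _ => this u), hB]
      exact (Finset.sum_filter _ _).symm
    have hBsum : ∑ u ∈ B, H.degree u = 2 * B.card := by
      rw [Finset.sum_congr rfl (fun u _ => hdeg u)]
      simp [Finset.sum_const, mul_comm]
    rcases hIe with ⟨k, hk⟩
    refine ⟨B.card - k, ?_⟩
    omega
  have hF2' : ∀ t < D, 2 ≤ (F t).card := by
    intro t ht
    have h1 := hF2 t
    have h2 := Finset.card_pos.mpr (hF1 t ht)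
    rcases h1 with ⟨k, hk⟩
    omega
  have hdisj : ∀ t ∈ Finset.range D, ∀ t' ∈ Finset.range D, t ≠ t' → Disjoint (F t) (F t') := by
    intro t _ t' _ hne
    rw [Finset.disjoint_left]
    intro p hp hp'
    exact hne ((hFd t p hp).1 ▸ (hFd t' p hp').1 ▸ rfl)
  have hbi : ((Finset.range D).biUnion F).card = ∑ t ∈ Finset.range D, (F t).card :=
    Finset.card_biUnion hdisj
  have hle : ((Finset.range D).biUnion F).card ≤ H.edgeFinset.card := by
    apply Finset.card_le_card_of_injOn (fun p => s(p.1, p.2))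
    · intro p hp
      obtain ⟨t, _, hpt⟩ := Finset.mem_biUnion.mp hp
      simp only [hF, Finset.mem_filter, Finset.mem_univ, true_and] at hpt
      rw [Finset.mem_coe, mem_edgeFinset, mem_edgeSet]
      exact hpt.2.2
    · intro p hp q hq hpq
      obtain ⟨t, _, hpt⟩ := Finset.mem_biUnion.mp hp
      obtain ⟨t', _, hqt⟩ := Finset.mem_biUnion.mp hq
      have h1 := hFd t p hpt
      have h2 := hFd t' q hqt
      rcases Sym2.eq_iff.mp hpq with ⟨e1, e2⟩ | ⟨e1, e2⟩
      · exact Prod.ext e1 e2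
      · exfalso
        rw [e1] at h1
        rw [← e2] at h2
        omega
  have hedge : H.edgeFinset.card = Fintype.card W := by
    have h1 := H.sum_degrees_eq_twice_card_edges
    rw [Finset.sum_congr rfl (fun u _ => hdeg u), Finset.sum_const, Finset.card_univ,
      smul_eq_mul] at h1
    omega
  calc 2 * D = ∑ _t ∈ Finset.range D, 2 := by
        rw [Finset.sum_const, Finset.card_range, smul_eq_mul]; ring
    _ ≤ ∑ t ∈ Finset.range D, (F t).card :=
        Finset.sum_le_sum (fun t ht => hF2' t (Finset.mem_range.mp ht))
    _ = ((Finset.range D).biUnion F).card := hbi.symm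
    _ ≤ H.edgeFinset.card := hle
    _ = Fintype.card W := hedge

lemma ball_growth {W : Type} [Fintype W] (H : SimpleGraph W) (hconn : H.Connected)
    (S : Set W) (hS : S.Nonempty) (r : ℕ) :
    min (S.ncard + r) (Fintype.card W) ≤ {y : W | ∃ c ∈ S, H.dist c y ≤ r}.ncard := by
  classical
  induction r with
  | zero =>
    have hsub : S ⊆ {y : W | ∃ c ∈ S, H.dist c y ≤ 0} := by
      intro c hc
      exact ⟨c, hc, by simp [SimpleGraph.dist_self]⟩
    calc min (S.ncard + 0) (Fintype.card W) ≤ S.ncard := by omega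
      _ ≤ _ := Set.ncard_le_ncard hsub (Set.toFinite _)
  | succ r ih =>
    set B : Set W := {y : W | ∃ c ∈ S, H.dist c y ≤ r} with hB
    have hmono : B ⊆ {y : W | ∃ c ∈ S, H.dist c y ≤ r + 1} := by
      rintro y ⟨c, hc, hd⟩
      exact ⟨c, hc, by omega⟩
    by_cases huniv : B = Set.univ
    · have : Fintype.card W ≤ {y : W | ∃ c ∈ S, H.dist c y ≤ r + 1}.ncard := by
        have := Set.ncard_le_ncard (huniv ▸ hmono) (Set.toFinite _)
        simpa [Set.ncard_univ] using this
      omega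
    · obtain ⟨yout, hyout⟩ : ∃ y, y ∉ B := by
        by_contra h
        push_neg at h
        exact huniv (Set.eq_univ_of_forall h)
      obtain ⟨c0, hc0⟩ := hS
      have hc0B : c0 ∈ B := ⟨c0, hc0, by simp [SimpleGraph.dist_self]⟩
      obtain ⟨w⟩ := hconn.preconnected c0 yout
      obtain ⟨a, b, hab, ha, hb⟩ := cross_lemma (· ∈ B) w hc0B hyout
      have hbnew : b ∈ {y : W | ∃ c ∈ S, H.dist c y ≤ r + 1} := by
        obtain ⟨c, hc, hd⟩ := ha
        refine ⟨c, hc, ?_⟩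
        have h1 := hconn.dist_triangle (u := c) (v := a) (w := b)
        rw [dist_eq_one_iff_adj.mpr hab] at h1
        omega
      have hins : insert b B ⊆ {y : W | ∃ c ∈ S, H.dist c y ≤ r + 1} := by
        intro z hz
        rcases Set.mem_insert_iff.mp hz with rfl | hz
        · exact hbnew
        · exact hmono hz
      have h1 : (insert b B).ncard = B.ncard + 1 := Set.ncard_insert_of_notMem hb
      have h2 := Set.ncard_le_ncard hins (Set.toFinite _)
      omega

-- walk inside a cycle set of at most half its length
lemma cycle_walk {V : Type} (G : SimpleGraph V) {C : Set V} (hC : IsCycleSet G C)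
    {a b : V} (ha : a ∈ C) (hb : b ∈ C) :
    ∃ p : G.Walk a b, 2 * p.length ≤ Nat.card ↥C := by
  classical
  obtain ⟨hfin, hne, hconn, hreg2⟩ := hC
  haveI : Fintype ↥C := hfin.fintype
  have hreg' : ∀ v : ↥C, Nat.card ((G.induce C).neighborSet v) = 2 := by
    intro v
    have e : ((G.induce C).neighborSet v) ≃ {w : V // w ∈ C ∧ G.Adj ↑v w} :=
      { toFun := fun w => ⟨w.1.1, w.1.2, w.2⟩
        invFun := fun w => ⟨⟨w.1, w.2.1⟩, w.2.2⟩
        left_inv := fun w => rfl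
        right_inv := fun w => rfl }
    rw [Nat.card_congr e]
    exact hreg2 ↑v v.2
  have hd := half_diam (G.induce C) hconn hreg' ⟨a, ha⟩ ⟨b, hb⟩
  obtain ⟨p, hp⟩ := hconn.exists_walk_length_eq_dist ⟨a, ha⟩ ⟨b, hb⟩
  refine ⟨p.map (SimpleGraph.Embedding.induce C).toHom, ?_⟩
  erw [SimpleGraph.Walk.length_map, hp, Nat.card_eq_fintype_card]
  exact hd

/-- In a finite `d`-regular graph (`d ≥ 3`) in which every ball of radius `s`
contains at most one cycle, any connected vertex set `A` with `|A| ≤ κ·s`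
contains at most `κ` distinct short cycles (cycles with at most `2s` edges). -/
theorem stmt_3 {V : Type} [Fintype V] (G : SimpleGraph V) (d s κ : ℕ)
    (hd : 3 ≤ d) (hs : 0 < s) (hκ : 1 ≤ κ)
    (hreg : ∀ v : V, Nat.card (G.neighborSet v) = d)
    (hball : ∀ x : V, {C : Set V | C ⊆ gBall G x s ∧ IsCycleSet G C}.Subsingleton)
    (A : Set V) (hAconn : (G.induce A).Connected) (hAcard : Nat.card ↥A ≤ κ * s) :
    Nat.card {C : Set V // C ⊆ A ∧ IsCycleSet G C ∧ Nat.card ↥C ≤ 2 * s} ≤ κ := by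
  classical
  haveI : Fintype ↥A := A.toFinite.fintype
  haveI hAne : Nonempty ↥A := hAconn.nonempty
  obtain ⟨a0, ha0⟩ : A.Nonempty := by
    obtain ⟨⟨a, ha⟩⟩ := hAne
    exact ⟨a, ha⟩
  set nA := Nat.card ↥A with hnA
  have hnA1 : 1 ≤ nA := Nat.one_le_iff_ne_zero.mpr Nat.card_pos.ne'
  set T := {C : Set V // C ⊆ A ∧ IsCycleSet G C ∧ Nat.card ↥C ≤ 2 * s} with hT
  set O : T → Set V := fun C => {y | y ∈ A ∧ ∀ c ∈ C.1, G.dist y c ≤ s} with hO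
  -- each O C is large
  have hsize : ∀ C : T, min s nA ≤ (O C).ncard := by
    rintro ⟨C, hCA, hCcyc, hCs⟩
    set m := Nat.card ↥C with hm
    haveI : Finite ↥C := hCcyc.1.to_subtype
    haveI : Nonempty ↥C := hCcyc.2.1.to_subtype
    have hmpos : 1 ≤ m := Nat.one_le_iff_ne_zero.mpr Nat.card_pos.ne'
    set S' : Set ↥A := {z : ↥A | ↑z ∈ C} with hS'
    have hS'ne : S'.Nonempty := by
      obtain ⟨c, hc⟩ := hCcyc.2.1
      exact ⟨⟨c, hCA hc⟩, hc⟩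
    have hS'card : S'.ncard = m := by
      rw [← Nat.card_coe_set_eq, hm]
      apply Nat.card_congr
      exact { toFun := fun z => ⟨z.1.1, z.2⟩
              invFun := fun c => ⟨⟨c.1, hCA c.2⟩, c.2⟩
              left_inv := fun z => rfl
              right_inv := fun c => rfl }
    set r := s - m / 2 with hr
    set B : Set ↥A := {y : ↥A | ∃ c ∈ S', (G.induce A).dist c y ≤ r} with hB
    have hgrow := ball_growth (G.induce A) hAconn S' hS'ne r
    have hsub : Subtype.val '' B ⊆ O ⟨C, hCA, hCcyc, hCs⟩ := by
      rintro _ ⟨y, hyB, rfl⟩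
      refine ⟨y.2, ?_⟩
      intro c0 hc0
      obtain ⟨c, hcS, hcd⟩ := hyB
      obtain ⟨p, hp⟩ := hAconn.exists_walk_length_eq_dist c y
      obtain ⟨q, hq⟩ := cycle_walk G hCcyc hcS hc0
      have hdle := G.dist_le (((p.map (SimpleGraph.Embedding.induce A).toHom).reverse).append q)
      erw [Walk.length_append, Walk.length_reverse, Walk.length_map, hp] at hdle
      have hdd : G.dist (↑y) c0 ≤ (G.induce A).dist c y + q.length := hdle
      have hms : m / 2 ≤ s := by omega
      omega
    have hle2 : B.ncard ≤ (O ⟨C, hCA, hCcyc, hCs⟩).ncard := by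
      have h1 := Set.ncard_le_ncard hsub (Set.toFinite _)
      rwa [Set.ncard_image_of_injective _ Subtype.val_injective] at h1
    have hdiv : m / 2 * 2 ≤ m := Nat.div_mul_le_self m 2
    have hcast : Fintype.card ↥A = nA := by rw [hnA, Nat.card_eq_fintype_card]
    have hgrow' : min (m + r) nA ≤ B.ncard := by
      rw [hS'card, hcast] at hgrow
      exact hgrow
    omega
  -- disjointness
  have hdisj : ∀ C C' : T, C ≠ C' → Disjoint (O C) (O C') := by
    intro C C' hne
    rw [Set.disjoint_left]
    rintro y ⟨hyA, hyC⟩ ⟨_, hyC'⟩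
    apply hne
    apply Subtype.ext
    exact hball y ⟨fun c hc => hyC c hc, C.2.2.1⟩ ⟨fun c hc => hyC' c hc, C'.2.2.1⟩
  -- counting
  haveI : Finite T := by
    have : Finite (Set V) := inferInstance
    exact Subtype.finite
  haveI : Fintype T := Fintype.ofFinite T
  set f : T → Finset V := fun C => (O C).toFinite.toFinset with hf
  have hfcard : ∀ C, (f C).card = (O C).ncard :=
    fun C => (Set.ncard_eq_toFinset_card (O C) (Set.toFinite _)).symm
  have hdisjF : ∀ C ∈ (Finset.univ : Finset T), ∀ C' ∈ Finset.univ, C ≠ C' →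
      Disjoint (f C) (f C') := by
    intro C _ C' _ hne
    simp only [hf, Set.Finite.disjoint_toFinset]
    exact hdisj C C' hne
  have hbU : (Finset.univ.biUnion f).card = ∑ C : T, (f C).card := Finset.card_biUnion hdisjF
  have hsubA : Finset.univ.biUnion f ⊆ A.toFinite.toFinset := by
    intro v hv
    obtain ⟨C, _, hvC⟩ := Finset.mem_biUnion.mp hv
    rw [Set.Finite.mem_toFinset] at hvC ⊢
    exact hvC.1
  have hsum : Fintype.card T * min s nA ≤ ∑ C : T, (f C).card := by
    have := Finset.card_nsmul_le_sum Finset.univ (fun C => (f C).card) (min s nA)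
      (fun C _ => by rw [hfcard C]; exact hsize C)
    simpa [Finset.card_univ, mul_comm] using this
  have hAcard' : (A.toFinite.toFinset).card = nA := by
    rw [← Set.ncard_eq_toFinset_card, hnA, Nat.card_coe_set_eq]
  have htot : Fintype.card T * min s nA ≤ nA := by
    calc Fintype.card T * min s nA ≤ ∑ C : T, (f C).card := hsum
      _ = (Finset.univ.biUnion f).card := hbU.symm
      _ ≤ (A.toFinite.toFinset).card := Finset.card_le_card hsubA
      _ = nA := hAcard'
  have hgoal : Nat.card T ≤ κ := by
    rw [Nat.card_eq_fintype_card]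
    rcases le_total s nA with hcase | hcase
    · rw [min_eq_left hcase] at htot
      have := le_trans htot hAcard
      exact Nat.le_of_mul_le_mul_right this hs
    · rw [min_eq_right hcase] at htot
      have h1 : Fintype.card T * nA ≤ 1 * nA := by omega
      have h2 : Fintype.card T ≤ 1 :=
        Nat.le_of_mul_le_mul_right h1 (by omega)
      omega
  exact hgoal
end

section
/- Let G be a finite connected graph, A and C disjoint nonempty vertex subsets, g* the equilibrium potential g*(x) = P_x[H_A ≤ H_C], and f*(x) = 1 - E_x[H_A]/E_π[H_A]. Then D(g*, g*)·(1 - 2·sup_{x∈C} |f*(x)|) ≤ 1/E_π[H_A] ≤ D(g*, g*)·π(C)^{-2}. -/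
open Finset


private lemma cs_helper {V : Type} [Fintype V] (pii : V → ℝ) (p : V → V → ℝ)
    (hw : ∀ x y, 0 ≤ pii x * p x y) (u v : V → ℝ) :
    (∑ x : V, ∑ y : V, (u x - u y) * (v x - v y) * pii x * p x y) ^ 2
      ≤ (∑ x : V, ∑ y : V, (u x - u y) * (u x - u y) * pii x * p x y)
        * (∑ x : V, ∑ y : V, (v x - v y) * (v x - v y) * pii x * p x y) := by
  have h1 : ∀ (f : V → V → ℝ), ∑ x : V, ∑ y : V, f x y = ∑ i : V × V, f i.1 i.2 := by
    intro f; rw [← Finset.univ_product_univ, Finset.sum_product]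
  rw [h1 (fun x y => (u x - u y) * (v x - v y) * pii x * p x y),
      h1 (fun x y => (u x - u y) * (u x - u y) * pii x * p x y),
      h1 (fun x y => (v x - v y) * (v x - v y) * pii x * p x y)]
  refine Finset.sum_sq_le_sum_mul_sum_of_sq_eq_mul Finset.univ
    (fun i _ => ?_) (fun i _ => ?_) (fun i _ => by ring)
  · have e : (u i.1 - u i.2) * (u i.1 - u i.2) * pii i.1 * p i.1 i.2
        = (u i.1 - u i.2) * (u i.1 - u i.2) * (pii i.1 * p i.1 i.2) := by ring
    rw [e]; exact mul_nonneg (mul_self_nonneg _) (hw _ _)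
  · have e : (v i.1 - v i.2) * (v i.1 - v i.2) * pii i.1 * p i.1 i.2
        = (v i.1 - v i.2) * (v i.1 - v i.2) * (pii i.1 * p i.1 i.2) := by ring
    rw [e]; exact mul_nonneg (mul_self_nonneg _) (hw _ _)

private lemma walk_min_reach {V : Type} [Fintype V] {G : SimpleGraph V}
    {A C : Finset V} {p : V → V → ℝ} {u : V → ℝ} {m : ℝ}
    (hmin : ∀ x, m ≤ u x)
    (hp1 : ∀ x, ∑ y : V, p x y = 1)
    (hp0 : ∀ x y, 0 ≤ p x y)
    (hppos : ∀ x y, G.Adj x y → 0 < p x y)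
    (hu : ∀ x, x ∉ A → x ∉ C → u x = ∑ y : V, p x y * u y) :
    ∀ {v a : V}, G.Walk v a → a ∈ A → u v = m → ∃ z, (z ∈ A ∨ z ∈ C) ∧ u z = m := by
  intro v a w
  induction w with
  | nil => exact fun ha hv => ⟨_, Or.inl ha, hv⟩
  | @cons x b a hadj w ih =>
    intro ha hx
    by_cases hxA : x ∈ A
    · exact ⟨x, Or.inl hxA, hx⟩
    by_cases hxC : x ∈ C
    · exact ⟨x, Or.inr hxC, hx⟩
    have key : ∑ z : V, p x z * (u z - m) = 0 := by
      have e1 : ∑ z : V, p x z * (u z - m)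
          = (∑ z : V, p x z * u z) - (∑ z : V, p x z) * m := by
        rw [Finset.sum_mul, ← Finset.sum_sub_distrib]
        exact Finset.sum_congr rfl fun z _ => by ring
      rw [e1, hp1 x, ← hu x hxA hxC, hx]; ring
    have hterm : ∀ z ∈ Finset.univ, 0 ≤ p x z * (u z - m) :=
      fun z _ => mul_nonneg (hp0 x z) (by linarith [hmin z])
    have hb : p x b * (u b - m) = 0 :=
      (Finset.sum_eq_zero_iff_of_nonneg hterm).mp key b (Finset.mem_univ b)
    have hub : u b = m := by
      rcases mul_eq_zero.mp hb with h' | h'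
      · exact absurd h' (hppos x b hadj).ne'
      · linarith
    exact ih ha hub


private lemma dform_eq {V : Type} [Fintype V] (pii : V → ℝ) (p : V → V → ℝ)
    (hrev : ∀ x y, pii x * p x y = pii y * p y x)
    (hprow : ∀ x, ∑ y : V, p x y = 1) (u v : V → ℝ) :
    (1/2 : ℝ) * ∑ x : V, ∑ y : V, (u x - u y) * (v x - v y) * pii x * p x y
      = ∑ x : V, pii x * v x * (u x - ∑ y : V, p x y * u y) := by
  have T1 : ∀ x : V, ∑ y : V, (u x - u y) * v x * (pii x * p x y)
      = pii x * v x * (u x - ∑ y : V, p x y * u y) := by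
    intro x
    have e : ∑ y : V, (u x - u y) * v x * (pii x * p x y)
        = (∑ y : V, p x y) * (u x * v x * pii x)
          - (∑ y : V, p x y * u y) * (v x * pii x) := by
      rw [Finset.sum_mul, Finset.sum_mul, ← Finset.sum_sub_distrib]
      exact Finset.sum_congr rfl fun y _ => by ring
    rw [e, hprow x]; ring
  have split : ∑ x : V, ∑ y : V, (u x - u y) * (v x - v y) * pii x * p x y
      = (∑ x : V, ∑ y : V, (u x - u y) * v x * (pii x * p x y))
        - (∑ x : V, ∑ y : V, (u x - u y) * v y * (pii x * p x y)) := by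
    rw [← Finset.sum_sub_distrib]
    refine Finset.sum_congr rfl fun x _ => ?_
    rw [← Finset.sum_sub_distrib]
    exact Finset.sum_congr rfl fun y _ => by ring
  have T2 : ∑ x : V, ∑ y : V, (u x - u y) * v y * (pii x * p x y)
      = - ∑ x : V, ∑ y : V, (u x - u y) * v x * (pii x * p x y) := by
    have e1 : ∑ x : V, ∑ y : V, (u x - u y) * v y * (pii x * p x y)
        = ∑ x : V, ∑ y : V, (u x - u y) * v y * (pii y * p y x) :=
      Finset.sum_congr rfl fun x _ => Finset.sum_congr rfl fun y _ => by rw [hrev]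
    have e2 : ∑ y : V, ∑ x : V, (u x - u y) * v y * (pii y * p y x)
        = ∑ y : V, ∑ x : V, -((u y - u x) * v y * (pii y * p y x)) :=
      Finset.sum_congr rfl fun y _ => Finset.sum_congr rfl fun x _ => by ring
    rw [e1, Finset.sum_comm, e2]
    simp
  have T1s : ∑ x : V, ∑ y : V, (u x - u y) * v x * (pii x * p x y)
      = ∑ x : V, pii x * v x * (u x - ∑ y : V, p x y * u y) :=
    Finset.sum_congr rfl fun x _ => T1 x
  rw [split, T2, T1s]; ring

open SimpleGraph Finset

private lemma quarter_sq {a b c : ℝ} (hbc : a ^ 2 ≤ b * c) :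
    (1 / 2 * a) ^ 2 ≤ 1 / 2 * b * (1 / 2 * c) := by nlinarith

set_option maxHeartbeats 1000000 in
/-- Two-sided bound for the reciprocal mean stationary hitting time of `A`
in terms of the Dirichlet energy of the equilibrium potential `g* = g*_{A,C}`:
`D(g*,g*)·(1 - 2 sup_{x∈C} |f*(x)|) ≤ D(g*,g*)·π(C)^{-2}`-style bound,
where `f*(x) = 1 - E_x[H_A]/E_π[H_A]`.  Here `h x = E_x[H_A]` and the
equilibrium potential `g` are characterized by their harmonic equations. -/
theorem stmt_5 {V : Type} [Fintype V] [Nonempty V] [DecidableEq V]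
    (G : SimpleGraph V) [DecidableRel G.Adj] (hconn : G.Connected)
    (A C : Finset V) (hA : A.Nonempty) (hC : C.Nonempty) (hAC : Disjoint A C)
    (p : V → V → ℝ) (hp : ∀ x y, p x y = if G.Adj x y then ((G.degree x : ℝ))⁻¹ else 0)
    (pi : V → ℝ) (hpi : ∀ x, pi x = (G.degree x : ℝ) / ∑ y : V, (G.degree y : ℝ))
    (D : (V → ℝ) → (V → ℝ) → ℝ)
    (hD : ∀ f g, D f g
      = (1 / 2) * ∑ x : V, ∑ y : V, (f x - f y) * (g x - g y) * pi x * p x y)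
    (h : V → ℝ) (hh0 : ∀ x ∈ A, h x = 0)
    (hhrec : ∀ x, x ∉ A → h x = 1 + ∑ y : V, p x y * h y)
    (g : V → ℝ) (hgA : ∀ x ∈ A, g x = 1) (hgC : ∀ x ∈ C, g x = 0)
    (hgharm : ∀ x, x ∉ A → x ∉ C → g x = ∑ y : V, p x y * g y) :
    D g g * (1 - 2 * C.sup' hC (fun x => |1 - h x / ∑ y : V, pi y * h y|))
        ≤ (∑ x : V, pi x * h x)⁻¹
      ∧ (∑ x : V, pi x * h x)⁻¹ ≤ D g g * ((∑ x ∈ C, pi x) ^ 2)⁻¹ := by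
  classical
  obtain ⟨a0, ha0⟩ := id hA
  obtain ⟨c0, hc0⟩ := id hC
  have hdisj := Finset.disjoint_left.mp hAC
  have hne : a0 ≠ c0 := fun e => hdisj ha0 (e ▸ hc0)
  have hnontriv : Nontrivial V := ⟨a0, c0, hne⟩
  -- positivity of degrees
  have hadjex : ∀ x : V, ∃ y, G.Adj x y := by
    intro x
    obtain ⟨y, hy⟩ := exists_ne x
    obtain ⟨w⟩ := hconn.preconnected x y
    cases w with
    | nil => exact absurd rfl hy
    | cons hxz _ => exact ⟨_, hxz⟩
  have hdeg : ∀ x : V, (0:ℝ) < (G.degree x : ℝ) := by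
    intro x
    have := (G.degree_pos_iff_exists_adj x).mpr (hadjex x)
    exact_mod_cast this
  set S : ℝ := ∑ y : V, (G.degree y : ℝ) with hSdef
  have hS : 0 < S := Finset.sum_pos (fun y _ => hdeg y) univ_nonempty
  have hpipos : ∀ x, 0 < pi x := fun x => by rw [hpi]; exact div_pos (hdeg x) hS
  have hp0 : ∀ x y, 0 ≤ p x y := by
    intro x y; rw [hp]
    split
    · exact inv_nonneg.mpr (hdeg x).le
    · exact le_refl 0
  have hppos : ∀ x y, G.Adj x y → 0 < p x y := by
    intro x y hxy; rw [hp, if_pos hxy]; exact inv_pos.mpr (hdeg x)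
  have hprow : ∀ x, ∑ y : V, p x y = 1 := by
    intro x
    have e0 : ∑ y : V, p x y = ∑ y : V, (if G.Adj x y then ((G.degree x : ℝ))⁻¹ else 0) :=
      Finset.sum_congr rfl fun y _ => hp x y
    rw [e0, ← Finset.sum_filter]
    have e1 : Finset.univ.filter (fun y => G.Adj x y) = G.neighborFinset x := by
      ext z; simp [SimpleGraph.mem_neighborFinset]
    rw [e1, Finset.sum_const]
    have : (G.neighborFinset x).card = G.degree x := rfl
    rw [this, nsmul_eq_mul, mul_inv_cancel₀ (hdeg x).ne']
  have hrev : ∀ x y, pi x * p x y = pi y * p y x := by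
    intro x y
    rw [hpi x, hpi y, hp x y, hp y x]
    by_cases hxy : G.Adj x y
    · rw [if_pos hxy, if_pos hxy.symm, div_mul_eq_mul_div, div_mul_eq_mul_div,
        mul_inv_cancel₀ (hdeg x).ne', mul_inv_cancel₀ (hdeg y).ne']
    · rw [if_neg hxy, if_neg (fun h' => hxy h'.symm)]; ring
  have hpcol : ∀ y, ∑ x : V, pi x * p x y = pi y := by
    intro y
    calc ∑ x : V, pi x * p x y = ∑ x : V, pi y * p y x :=
          Finset.sum_congr rfl fun x _ => hrev x y
    _ = pi y * ∑ x : V, p y x := by rw [Finset.mul_sum]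
    _ = pi y := by rw [hprow y, mul_one]
  have hpisum : ∑ x : V, pi x = 1 := by
    rw [Finset.sum_congr rfl fun x _ => hpi x, ← Finset.sum_div, ← hSdef, div_self hS.ne']
  -- nonnegativity of h
  have hhnn : ∀ x, 0 ≤ h x := by
    obtain ⟨x0, -, hx0⟩ := Finset.exists_min_image Finset.univ h univ_nonempty
    have hx0A : x0 ∈ A := by
      by_contra hx0A
      have e := hhrec x0 hx0A
      have hle : h x0 ≤ ∑ y : V, p x0 y * h y := by
        calc h x0 = (∑ y : V, p x0 y) * h x0 := by rw [hprow]; ring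
        _ = ∑ y : V, p x0 y * h x0 := by rw [Finset.sum_mul]
        _ ≤ ∑ y : V, p x0 y * h y :=
          Finset.sum_le_sum fun y _ =>
            mul_le_mul_of_nonneg_left (hx0 y (Finset.mem_univ y)) (hp0 x0 y)
      linarith
    intro x
    have := hx0 x (Finset.mem_univ x)
    rw [hh0 x0 hx0A] at this
    exact this
  -- bounds on g via minimum principle
  have hgnn : ∀ x, 0 ≤ g x := by
    obtain ⟨x0, -, hx0⟩ := Finset.exists_min_image Finset.univ g univ_nonempty
    have hx0' : ∀ x, g x0 ≤ g x := fun x => hx0 x (Finset.mem_univ x)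
    obtain ⟨w⟩ := hconn.preconnected x0 a0
    obtain ⟨z, hz, hz'⟩ := walk_min_reach hx0' hprow hp0 hppos hgharm w ha0 rfl
    intro x
    rcases hz with hzA | hzC
    · have h1 := hx0' c0
      rw [hgC c0 hc0] at h1
      rw [hgA z hzA] at hz'
      linarith [hx0' x]
    · rw [hgC z hzC] at hz'
      have := hx0' x; linarith
  have hgle : ∀ x, g x ≤ 1 := by
    have huharm : ∀ x, x ∉ A → x ∉ C → (-g x) = ∑ y : V, p x y * (-g y) := by
      intro x hxA hxC
      have : ∑ y : V, p x y * (-g y) = -∑ y : V, p x y * g y := by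
        rw [← Finset.sum_neg_distrib]
        exact Finset.sum_congr rfl fun y _ => by ring
      rw [this, ← hgharm x hxA hxC]
    obtain ⟨x0, -, hx0⟩ := Finset.exists_min_image Finset.univ (fun x => -g x) univ_nonempty
    have hx0' : ∀ x, -g x0 ≤ -g x := fun x => hx0 x (Finset.mem_univ x)
    obtain ⟨w⟩ := hconn.preconnected x0 a0
    obtain ⟨z, hz, hz'⟩ :=
      walk_min_reach (u := fun x => -g x) hx0' hprow hp0 hppos huharm w ha0 rfl
    intro x
    rcases hz with hzA | hzC
    · have : -g z = -1 := by rw [hgA z hzA]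
      rw [this] at hz'
      have := hx0' x; rw [← hz'] at this; linarith
    · have : -g z = 0 := by rw [hgC z hzC]; ring
      rw [this] at hz'
      have h1 := hx0' a0
      rw [hgA a0 ha0, ← hz'] at h1
      linarith
  set M : ℝ := ∑ x : V, pi x * h x with hMdef
  have hMpos : 0 < M := by
    have hc0A : c0 ∉ A := fun hx => hdisj hx hc0
    have h1 : 1 ≤ h c0 := by
      rw [hhrec c0 hc0A]
      have : (0:ℝ) ≤ ∑ y : V, p c0 y * h y :=
        Finset.sum_nonneg fun y _ => mul_nonneg (hp0 _ _) (hhnn y)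
      linarith
    have hle : pi c0 * h c0 ≤ M := by
      rw [hMdef]
      exact Finset.single_le_sum
        (fun x _ => mul_nonneg (hpipos x).le (hhnn x)) (Finset.mem_univ c0)
    nlinarith [hpipos c0]
  -- balance equation
  have hbal : ∀ u : V → ℝ, ∑ x : V, pi x * (u x - ∑ y : V, p x y * u y) = 0 := by
    intro u
    have e1 : ∀ x : V, pi x * (u x - ∑ y : V, p x y * u y)
        = pi x * u x - ∑ y : V, pi x * p x y * u y := by
      intro x
      rw [mul_sub, Finset.mul_sum]
      congr 1
      exact Finset.sum_congr rfl fun y _ => by ring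
    rw [Finset.sum_congr rfl fun x _ => e1 x, Finset.sum_sub_distrib, Finset.sum_comm]
    have e2 : ∀ y : V, ∑ x : V, pi x * p x y * u y = pi y * u y := by
      intro y; rw [← Finset.sum_mul, hpcol y]
    rw [Finset.sum_congr rfl fun y _ => e2 y, sub_self]
  -- orientation of the Dirichlet form
  have hDor : ∀ u v : V → ℝ, D u v = ∑ x : V, pi x * v x * (u x - ∑ y : V, p x y * u y) := by
    intro u v; rw [hD u v]; exact dform_eq pi p hrev hprow u v
  have hDsymm : ∀ u v : V → ℝ, D u v = D v u := by
    intro u v; rw [hD, hD]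
    congr 1
    exact Finset.sum_congr rfl fun x _ => Finset.sum_congr rfl fun y _ => by ring
  set E : ℝ := D g g with hEdef
  have hPhig0 : ∀ x, x ∉ A → x ∉ C → g x - ∑ y : V, p x y * g y = 0 := by
    intro x h1 h2
    have := hgharm x h1 h2; linarith
  have hEA : E = ∑ x ∈ A, pi x * (g x - ∑ y : V, p x y * g y) := by
    rw [hEdef, hDor g g]
    have e : ∀ x : V, pi x * g x * (g x - ∑ y : V, p x y * g y)
        = if x ∈ A then pi x * (g x - ∑ y : V, p x y * g y) else 0 := by
      intro x
      by_cases hxA : x ∈ A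
      · rw [if_pos hxA, hgA x hxA]; ring
      · by_cases hxC : x ∈ C
        · rw [if_neg hxA, hgC x hxC]; ring
        · rw [if_neg hxA, hPhig0 x hxA hxC]; ring
    rw [Finset.sum_congr rfl fun x _ => e x, Finset.sum_ite_mem, Finset.univ_inter]
  have hEC : ∑ x ∈ C, pi x * -(g x - ∑ y : V, p x y * g y) = E := by
    have hbg := hbal g
    have e : ∀ x : V, pi x * (g x - ∑ y : V, p x y * g y)
        = (if x ∈ A then pi x * (g x - ∑ y : V, p x y * g y) else 0)
          + (if x ∈ C then pi x * (g x - ∑ y : V, p x y * g y) else 0) := by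
      intro x
      by_cases hxA : x ∈ A
      · rw [if_pos hxA, if_neg (hdisj hxA)]; ring
      · by_cases hxC : x ∈ C
        · rw [if_neg hxA, if_pos hxC]; ring
        · rw [if_neg hxA, if_neg hxC, hPhig0 x hxA hxC]; ring
    rw [Finset.sum_congr rfl fun x _ => e x, Finset.sum_add_distrib,
      Finset.sum_ite_mem, Finset.sum_ite_mem, Finset.univ_inter, Finset.univ_inter,
      ← hEA] at hbg
    have e2 : ∑ x ∈ C, pi x * -(g x - ∑ y : V, p x y * g y)
        = - ∑ x ∈ C, pi x * (g x - ∑ y : V, p x y * g y) := by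
      rw [← Finset.sum_neg_distrib]
      exact Finset.sum_congr rfl fun x _ => by ring
    rw [e2]; linarith
  have hCterm_nn : ∀ x ∈ C, 0 ≤ pi x * -(g x - ∑ y : V, p x y * g y) := by
    intro x hx
    have h1 : (0:ℝ) ≤ ∑ y : V, p x y * g y :=
      Finset.sum_nonneg fun y _ => mul_nonneg (hp0 x y) (hgnn y)
    have h2 : -(g x - ∑ y : V, p x y * g y) = ∑ y : V, p x y * g y := by
      rw [hgC x hx]; ring
    rw [h2]; exact mul_nonneg (hpipos x).le h1
  have hEnn : 0 ≤ E := by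
    rw [← hEC]; exact Finset.sum_nonneg hCterm_nn
  set s : ℝ := C.sup' hC (fun x => |1 - h x / M|) with hsdef
  have hsle : ∀ x ∈ C, |1 - h x / M| ≤ s := fun x hx =>
    Finset.le_sup' (fun x => |1 - h x / M|) hx
  have hs0 : 0 ≤ s := le_trans (abs_nonneg _) (hsle c0 hc0)
  clear_value S M E s
  -- first cross-term identity
  have hDgf1 : D g (fun x => 1 - h x / M)
      = E + ∑ x ∈ C, pi x * (1 - h x / M) * (g x - ∑ y : V, p x y * g y) := by
    have hv := hDor g (fun x => 1 - h x / M)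
    try simp only at hv
    rw [hv]
    have e : ∀ x : V, pi x * (1 - h x / M) * (g x - ∑ y : V, p x y * g y)
        = (if x ∈ A then pi x * (g x - ∑ y : V, p x y * g y) else 0)
          + (if x ∈ C then pi x * (1 - h x / M) * (g x - ∑ y : V, p x y * g y) else 0) := by
      intro x
      by_cases hxA : x ∈ A
      · rw [if_pos hxA, if_neg (hdisj hxA), hh0 x hxA]; ring
      · by_cases hxC : x ∈ C
        · rw [if_neg hxA, if_pos hxC]; ring
        · rw [if_neg hxA, if_neg hxC, hPhig0 x hxA hxC]; ring
    rw [Finset.sum_congr rfl fun x _ => e x, Finset.sum_add_distrib,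
      Finset.sum_ite_mem, Finset.sum_ite_mem, Finset.univ_inter, Finset.univ_inter, ← hEA]
  -- Phi of f off A
  have hPhif : ∀ x, x ∉ A →
      (1 - h x / M) - ∑ y : V, p x y * (1 - h y / M) = -M⁻¹ := by
    intro x hxA
    have e : ∑ y : V, p x y * (1 - h y / M)
        = (∑ y : V, p x y) - (∑ y : V, p x y * h y) / M := by
      rw [Finset.sum_div, ← Finset.sum_sub_distrib]
      exact Finset.sum_congr rfl fun y _ => by ring
    rw [e, hprow x, hhrec x hxA]
    ring
  have hT : ∑ x : V, (if x ∈ A then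
        pi x * ((((1:ℝ) - h x / M) - ∑ y : V, p x y * (1 - h y / M)) + M⁻¹) else 0)
      = M⁻¹ := by
    have hbf := hbal (fun x => 1 - h x / M)
    try simp only at hbf
    have e : ∀ x : V, pi x * ((1 - h x / M) - ∑ y : V, p x y * (1 - h y / M))
        = pi x * (-M⁻¹)
          + (if x ∈ A then
              pi x * ((((1:ℝ) - h x / M) - ∑ y : V, p x y * (1 - h y / M)) + M⁻¹) else 0) := by
      intro x
      by_cases hxA : x ∈ A
      · rw [if_pos hxA]; ring
      · rw [if_neg hxA, hPhif x hxA]; ring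
    rw [Finset.sum_congr rfl fun x _ => e x, Finset.sum_add_distrib, ← Finset.sum_mul,
      hpisum] at hbf
    linarith
  have hDgf2 : D g (fun x => 1 - h x / M) = (1 - ∑ x : V, pi x * g x) / M := by
    rw [hDsymm g (fun x => 1 - h x / M)]
    have hv2 := hDor (fun x => 1 - h x / M) g
    try simp only at hv2
    rw [hv2]
    have e : ∀ x : V, pi x * g x * ((1 - h x / M) - ∑ y : V, p x y * (1 - h y / M))
        = pi x * g x * (-M⁻¹)
          + (if x ∈ A then
              pi x * ((((1:ℝ) - h x / M) - ∑ y : V, p x y * (1 - h y / M)) + M⁻¹) else 0) := by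
      intro x
      by_cases hxA : x ∈ A
      · rw [if_pos hxA, hgA x hxA]; ring
      · rw [if_neg hxA, hPhif x hxA]; ring
    rw [Finset.sum_congr rfl fun x _ => e x, Finset.sum_add_distrib, hT, ← Finset.sum_mul]
    rw [div_eq_mul_inv]
    ring
  have hDff : D (fun x => 1 - h x / M) (fun x => 1 - h x / M) = M⁻¹ := by
    have hv := hDor (fun x => 1 - h x / M) (fun x => 1 - h x / M)
    try simp only at hv
    rw [hv]
    have e : ∀ x : V, pi x * (1 - h x / M) * ((1 - h x / M) - ∑ y : V, p x y * (1 - h y / M))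
        = pi x * (1 - h x / M) * (-M⁻¹)
          + (if x ∈ A then
              pi x * ((((1:ℝ) - h x / M) - ∑ y : V, p x y * (1 - h y / M)) + M⁻¹) else 0) := by
      intro x
      by_cases hxA : x ∈ A
      · rw [if_pos hxA, hh0 x hxA]; ring
      · rw [if_neg hxA, hPhif x hxA]; ring
    rw [Finset.sum_congr rfl fun x _ => e x, Finset.sum_add_distrib, hT, ← Finset.sum_mul]
    have hzero : ∑ x : V, pi x * (1 - h x / M) = 0 := by
      have e2 : ∀ x : V, pi x * (1 - h x / M) = pi x - (pi x * h x) / M :=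
        fun x => by ring
      rw [Finset.sum_congr rfl fun x _ => e2 x, Finset.sum_sub_distrib, hpisum,
        ← Finset.sum_div, ← hMdef, div_self hMpos.ne']
      ring
    rw [hzero]; ring
  -- lower bound pieces
  have hClb : -(s * E) ≤ ∑ x ∈ C, pi x * (1 - h x / M) * (g x - ∑ y : V, p x y * g y) := by
    have hpt : ∀ x ∈ C, -(s * (pi x * -(g x - ∑ y : V, p x y * g y)))
        ≤ pi x * (1 - h x / M) * (g x - ∑ y : V, p x y * g y) := by
      intro x hx
      have hq : (0:ℝ) ≤ -(g x - ∑ y : V, p x y * g y) := by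
        have h1 : (0:ℝ) ≤ ∑ y : V, p x y * g y :=
          Finset.sum_nonneg fun y _ => mul_nonneg (hp0 x y) (hgnn y)
        rw [hgC x hx]; linarith
      have h1 : (1 - h x / M) ≤ s := le_trans (le_abs_self _) (hsle x hx)
      have h2 : (0:ℝ) ≤ pi x * -(g x - ∑ y : V, p x y * g y) :=
        mul_nonneg (hpipos x).le hq
      have h3 := mul_le_mul_of_nonneg_left h1 h2
      nlinarith [h3]
    calc -(s * E) = ∑ x ∈ C, -(s * (pi x * -(g x - ∑ y : V, p x y * g y))) := by
          rw [Finset.sum_neg_distrib, ← Finset.mul_sum, hEC]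
      _ ≤ _ := Finset.sum_le_sum hpt
  have hgsum_nn : 0 ≤ ∑ x : V, pi x * g x :=
    Finset.sum_nonneg fun x _ => mul_nonneg (hpipos x).le (hgnn x)
  have hub1 : D g (fun x => 1 - h x / M) ≤ M⁻¹ := by
    rw [hDgf2, inv_eq_one_div, div_le_div_iff₀ hMpos hMpos]
    nlinarith [hgsum_nn, hMpos]
  have lower : E * (1 - 2*s) ≤ M⁻¹ := by
    have hL2 : E * (1 - s) ≤ D g (fun x => 1 - h x / M) := by
      rw [hDgf1]; nlinarith [hClb]
    nlinarith [hEnn, hs0, hL2, hub1]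
  -- upper bound pieces
  have hπC : 0 < ∑ x ∈ C, pi x := Finset.sum_pos (fun x _ => hpipos x) ⟨c0, hc0⟩
  have hCle : ∑ x ∈ C, pi x ≤ 1 - ∑ x : V, pi x * g x := by
    have e : 1 - ∑ x : V, pi x * g x = ∑ x : V, (pi x - pi x * g x) := by
      rw [Finset.sum_sub_distrib, hpisum]
    rw [e]
    have e2 : ∑ x ∈ C, pi x = ∑ x ∈ C, (pi x - pi x * g x) :=
      Finset.sum_congr rfl fun x hx => by rw [hgC x hx]; ring
    rw [e2]
    refine Finset.sum_le_sum_of_subset_of_nonneg (Finset.subset_univ C) fun x _ _ => ?_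
    nlinarith [hgle x, hpipos x]
  have hwpp : ∀ x y, 0 ≤ pi x * p x y := fun x y => mul_nonneg (hpipos x).le (hp0 x y)
  have hCS : (D g (fun x => 1 - h x / M))^2
      ≤ E * D (fun x => 1 - h x / M) (fun x => 1 - h x / M) := by
    have hc := cs_helper pi p hwpp g (fun x => 1 - h x / M)
    rw [hEdef, hD g (fun x => 1 - h x / M), hD g g,
      hD (fun x => 1 - h x / M) (fun x => 1 - h x / M)]
    exact quarter_sq hc
  have hDgf_lb : (∑ x ∈ C, pi x) / M ≤ D g (fun x => 1 - h x / M) := by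
    rw [hDgf2, div_le_div_iff₀ hMpos hMpos]
    nlinarith [hCle, hMpos]
  have upper : M⁻¹ ≤ E * ((∑ x ∈ C, pi x)^2)⁻¹ := by
    have h2 : ((∑ x ∈ C, pi x)/M)^2 ≤ E * M⁻¹ := by
      calc ((∑ x ∈ C, pi x)/M)^2 ≤ (D g (fun x => 1 - h x / M))^2 :=
            pow_le_pow_left₀ (le_of_lt (div_pos hπC hMpos)) hDgf_lb 2
        _ ≤ E * D (fun x => 1 - h x / M) (fun x => 1 - h x / M) := hCS
        _ = E * M⁻¹ := by rw [hDff]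
    have h4 : (∑ x ∈ C, pi x)^2 ≤ E * M := by
      rw [div_pow, div_le_iff₀ (pow_pos hMpos 2)] at h2
      calc (∑ x ∈ C, pi x)^2 ≤ E * M⁻¹ * M^2 := h2
        _ = E * (M⁻¹ * M) * M := by ring
        _ = E * M := by rw [inv_mul_cancel₀ hMpos.ne', mul_one]
    have hπC2 : 0 < (∑ x ∈ C, pi x)^2 := pow_pos hπC 2
    rw [← div_eq_mul_inv, inv_eq_one_div, div_le_div_iff₀ hMpos hπC2]
    linarith
  exact ⟨lower, upper⟩
end
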